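/- If e₁ → e₂ in the composite graph G = G₂ ∘ G₁ with an edge e₁ of G₁ and an edge e₂ of G₂, then there exists an identified edge ē_k (formed from output oₖ of G₁ and input iₖ of G₂) with e₁ → ē_k in G₁ and ē_k → e₂ in G₂. -/
import Mathlib


/-- A progressive graph: a directed (multi)graph with sources `s`, targets `t`, and
a distinguished boundary set `σ` of vertices. -/
structure PGraph where
  V : Type
  E : Type
  s : E → V
  t : E → V
  σ : Set V

namespace PGraph

variable (G : PGraph)

/-- One edge can be followed by another. -/
def step (e f : G.E) : Prop := G.t e = G.s f

/-- The reachable order: a directed path starts with `e₁` and ends with `e₂`. -/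
def reach : G.E → G.E → Prop := Relation.ReflTransGen G.step

/-- No directed cycles. -/
def Acyclic : Prop := ∀ e, ¬ Relation.TransGen G.step e e

/-- Incoming edges of a vertex. -/
def I (v : G.V) : Set G.E := {e | G.t e = v}

/-- Outgoing edges of a vertex. -/
def O (v : G.V) : Set G.E := {e | G.s e = v}

/-- An input edge: it starts at a boundary vertex. -/
def InputEdge (e : G.E) : Prop := G.s e ∈ G.σ

/-- An output edge: it ends at a boundary vertex. -/
def OutputEdge (e : G.E) : Prop := G.t e ∈ G.σ

/-- An inner vertex. -/
def Inner (v : G.V) : Prop := v ∉ G.σ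

/-- An input vertex: a boundary vertex which is a source. -/
def InputVertex (v : G.V) : Prop := v ∈ G.σ ∧ ∃ e, G.s e = v

/-- An output vertex: a boundary vertex which is a sink. -/
def OutputVertex (v : G.V) : Prop := v ∈ G.σ ∧ ∃ e, G.t e = v

/-- The boundary consists of leaves: every boundary vertex has exactly one
incident edge-end. -/
def Progressive : Prop := ∀ v ∈ G.σ, ∃! e : G.E, G.s e = v ∨ G.t e = v

/-- The reflexive closure of a strict order on edges. -/
def le (lt : G.E → G.E → Prop) (a b : G.E) : Prop := lt a b ∨ a = b

/-- The convex hull of a set of edges with respect to a linear order `lt`. -/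
def conv (lt : G.E → G.E → Prop) (X : Set G.E) : Set G.E :=
  {y | ∃ a ∈ X, ∃ b ∈ X, G.le lt a y ∧ G.le lt y b}

/-- (Q₁): the reachable order implies the linear order. -/
def Q1 (lt : G.E → G.E → Prop) : Prop :=
  ∀ e₁ e₂, G.reach e₁ e₂ → G.le lt e₁ e₂

/-- (Q₂), the nesting condition. -/
def Q2 (lt : G.E → G.E → Prop) : Prop :=
  ∀ e₁ e e₂ : G.E, lt e₁ e → lt e e₂ →
    (G.t e₁ = G.t e₂ → G.I (G.t e) ⊆ G.conv lt (G.I (G.t e₁))) ∧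
    (G.s e₁ = G.s e₂ → G.O (G.s e) ⊆ G.conv lt (G.O (G.s e₁))) ∧
    (G.t e₁ = G.s e₂ →
      G.I (G.t e) ⊆ G.conv lt (G.I (G.t e₁)) ∨ G.O (G.s e) ⊆ G.conv lt (G.O (G.s e₂)))

/-- An upward planar order: a linear (strict total) order on edges satisfying
(Q₁) and the nesting condition (Q₂). -/
def UPO (lt : G.E → G.E → Prop) : Prop :=
  IsStrictTotalOrder G.E lt ∧ G.Q1 lt ∧ G.Q2 lt

/-- Admissibility: for every inner vertex `v`, input edges avoid `conv (O v)` and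
output edges avoid `conv (I v)`. -/
def Admissible (lt : G.E → G.E → Prop) : Prop :=
  ∀ v : G.V, G.Inner v →
    (∀ e, G.InputEdge e → e ∉ G.conv lt (G.O v)) ∧
    (∀ e, G.OutputEdge e → e ∉ G.conv lt (G.I v))

end PGraph

/-- Data exhibiting `G` as the composite `G₂ ∘ G₁` of two progressive graphs:
the edges of `G₁` and `G₂` embed into those of `G` via `j₁`, `j₂`, overlapping
exactly on the output edges of `G₁`, identified with the input edges of `G₂`;
the removed boundary vertices are the output vertices of `G₁` and the input
vertices of `G₂`, and the boundary of `G` is the union of the input vertices of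
`G₁` and the output vertices of `G₂`. -/
structure CompData (G₁ G₂ G : PGraph) where
  j₁ : G₁.E → G.E
  j₂ : G₂.E → G.E
  k₁ : G₁.V → G.V
  k₂ : G₂.V → G.V
  inj₁ : Function.Injective j₁
  inj₂ : Function.Injective j₂
  coverE : ∀ e : G.E, (∃ a, j₁ a = e) ∨ (∃ b, j₂ b = e)
  glue : ∀ a b, j₁ a = j₂ b → G₁.OutputEdge a ∧ G₂.InputEdge b
  glueOut : ∀ a, G₁.OutputEdge a → ∃ b, G₂.InputEdge b ∧ j₁ a = j₂ b
  glueIn : ∀ b, G₂.InputEdge b → ∃ a, G₁.OutputEdge a ∧ j₁ a = j₂ b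
  src₁ : ∀ a, G.s (j₁ a) = k₁ (G₁.s a)
  tgt₁ : ∀ a, ¬ G₁.OutputEdge a → G.t (j₁ a) = k₁ (G₁.t a)
  tgt₂ : ∀ b, G.t (j₂ b) = k₂ (G₂.t b)
  src₂ : ∀ b, ¬ G₂.InputEdge b → G.s (j₂ b) = k₂ (G₂.s b)
  injV₁ : ∀ v w, ¬ G₁.OutputVertex v → ¬ G₁.OutputVertex w → k₁ v = k₁ w → v = w
  injV₂ : ∀ v w, ¬ G₂.InputVertex v → ¬ G₂.InputVertex w → k₂ v = k₂ w → v = w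
  disjV : ∀ v w, ¬ G₁.OutputVertex v → ¬ G₂.InputVertex w → k₁ v ≠ k₂ w
  coverV : ∀ u : G.V,
    (∃ v, ¬ G₁.OutputVertex v ∧ k₁ v = u) ∨ (∃ w, ¬ G₂.InputVertex w ∧ k₂ w = u)
  bdry : ∀ u : G.V,
    u ∈ G.σ ↔ (∃ v, G₁.InputVertex v ∧ k₁ v = u) ∨ (∃ w, G₂.OutputVertex w ∧ k₂ w = u)

/-- `lt` is the shuffle-style composed linear order `lt₂ ∘ lt₁` on the edges of the
composite: it restricts to `lt₁` on `E(G₁)` and to `lt₂` on `E(G₂)`, and an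
unidentified edge of `G₁` precedes an unidentified edge of `G₂` iff some identified
edge `ē = j₁ o = j₂ i` lies weakly between them. -/
def IsCompOrder {G₁ G₂ G : PGraph} (C : CompData G₁ G₂ G)
    (lt₁ : G₁.E → G₁.E → Prop) (lt₂ : G₂.E → G₂.E → Prop)
    (lt : G.E → G.E → Prop) : Prop :=
  (∀ a a', lt₁ a a' ↔ lt (C.j₁ a) (C.j₁ a')) ∧
  (∀ b b', lt₂ b b' ↔ lt (C.j₂ b) (C.j₂ b')) ∧
  (∀ a b, (∀ b', C.j₁ a ≠ C.j₂ b') → (∀ a', C.j₂ b ≠ C.j₁ a') →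
    (lt (C.j₁ a) (C.j₂ b) ↔
      ∃ o i, C.j₁ o = C.j₂ i ∧ G₁.le lt₁ a o ∧ G₂.le lt₂ i b))

/-- If an edge of `G₁` reaches an edge of `G₂` in the composite `G = G₂ ∘ G₁`, then
there is an identified edge `ē_k = j₁ o = j₂ i` with `e₁ → o` in `G₁` and
`i → e₂` in `G₂`. -/
private lemma aux_not_outV (G : PGraph) (hP : G.Progressive) (hA : G.Acyclic) (a : G.E) :
    ¬ G.OutputVertex (G.s a) := by
  rintro ⟨hσ, e, hte⟩
  obtain ⟨f, _, huniq⟩ := hP _ hσ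
  have hae : a = e := (huniq a (Or.inl rfl)).trans (huniq e (Or.inr hte)).symm
  subst hae
  exact hA a (Relation.TransGen.single hte)

private lemma aux_not_inV (G : PGraph) (hP : G.Progressive) (hA : G.Acyclic) (b : G.E) :
    ¬ G.InputVertex (G.t b) := by
  rintro ⟨hσ, e, hse⟩
  obtain ⟨f, _, huniq⟩ := hP _ hσ
  have hbe : b = e := (huniq b (Or.inr rfl)).trans (huniq e (Or.inl hse)).symm
  subst hbe
  exact hA b (Relation.TransGen.single hse.symm)

private lemma aux_step2 {G₁ G₂ G : PGraph}
    (hP₁ : G₁.Progressive) (hA₁ : G₁.Acyclic)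
    (hP₂ : G₂.Progressive) (hA₂ : G₂.Acyclic)
    (C : CompData G₁ G₂ G) (b : G₂.E) (y : G.E)
    (h : G.step (C.j₂ b) y) : ∃ b', y = C.j₂ b' ∧ G₂.step b b' := by
  have ht : C.k₂ (G₂.t b) = G.s y := by rw [← C.tgt₂]; exact h
  by_cases hy : ∃ b', C.j₂ b' = y
  · obtain ⟨b', rfl⟩ := hy
    by_cases hin : G₂.InputEdge b'
    · obtain ⟨a, _, hab⟩ := C.glueIn b' hin
      have h2 : G.s (C.j₂ b') = C.k₁ (G₁.s a) := by rw [← hab, C.src₁]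
      exact absurd ((h2 ▸ ht).symm)
        (C.disjV _ _ (aux_not_outV G₁ hP₁ hA₁ a) (aux_not_inV G₂ hP₂ hA₂ b))
    · have h2 : G.s (C.j₂ b') = C.k₂ (G₂.s b') := C.src₂ b' hin
      have heq : G₂.t b = G₂.s b' := by
        refine C.injV₂ _ _ (aux_not_inV G₂ hP₂ hA₂ b) ?_ (by rw [ht, h2])
        rintro ⟨hσ, -⟩; exact hin hσ
      exact ⟨b', rfl, heq⟩
  · obtain ⟨a, rfl⟩ := (C.coverE y).resolve_right hy
    have hout : ¬ G₁.OutputEdge a := by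
      intro hout
      obtain ⟨b', _, hab⟩ := C.glueOut a hout
      exact hy ⟨b', hab.symm⟩
    have h2 : G.s (C.j₁ a) = C.k₁ (G₁.s a) := C.src₁ a
    exact absurd ((h2 ▸ ht).symm)
      (C.disjV _ _ (aux_not_outV G₁ hP₁ hA₁ a) (aux_not_inV G₂ hP₂ hA₂ b))

private lemma aux_reach2 {G₁ G₂ G : PGraph}
    (hP₁ : G₁.Progressive) (hA₁ : G₁.Acyclic)
    (hP₂ : G₂.Progressive) (hA₂ : G₂.Acyclic)
    (C : CompData G₁ G₂ G) (b e₂ : G₂.E)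
    (h : G.reach (C.j₂ b) (C.j₂ e₂)) : G₂.reach b e₂ := by
  suffices H : ∀ x, G.reach x (C.j₂ e₂) → ∀ b, x = C.j₂ b → G₂.reach b e₂ from
    H _ h b rfl
  intro x hx
  induction hx using Relation.ReflTransGen.head_induction_on with
  | refl =>
    intro b hb
    have : b = e₂ := C.inj₂ hb.symm
    subst this; exact Relation.ReflTransGen.refl
  | head h' hrest ih =>
    intro b hb
    subst hb
    obtain ⟨b', rfl, hstep⟩ := aux_step2 hP₁ hA₁ hP₂ hA₂ C b _ h'
    exact (ih b' rfl).head hstep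

theorem reach_through_identified_edge (G₁ G₂ G : PGraph)
    [Fintype G₁.E] [Fintype G₂.E] [Fintype G.E]
    (hP₁ : G₁.Progressive) (hA₁ : G₁.Acyclic)
    (hP₂ : G₂.Progressive) (hA₂ : G₂.Acyclic)
    (C : CompData G₁ G₂ G)
    (e₁ : G₁.E) (e₂ : G₂.E) (h : G.reach (C.j₁ e₁) (C.j₂ e₂)) :
    ∃ o i, G₁.OutputEdge o ∧ C.j₁ o = C.j₂ i ∧ G₁.reach e₁ o ∧ G₂.reach i e₂ := by
  suffices H : ∀ x, G.reach x (C.j₂ e₂) → ∀ a, x = C.j₁ a →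
      ∃ o i, G₁.OutputEdge o ∧ C.j₁ o = C.j₂ i ∧ G₁.reach a o ∧ G₂.reach i e₂ from
    H _ h e₁ rfl
  intro x hx
  induction hx using Relation.ReflTransGen.head_induction_on with
  | refl =>
    intro a ha
    obtain ⟨hout, _⟩ := C.glue a e₂ ha.symm
    exact ⟨a, e₂, hout, ha.symm, Relation.ReflTransGen.refl, Relation.ReflTransGen.refl⟩
  | @head x c h' hrest ih =>
    intro a ha
    subst ha
    by_cases hout : G₁.OutputEdge a
    · obtain ⟨b, _, hab⟩ := C.glueOut a hout
      have hr : G.reach (C.j₂ b) (C.j₂ e₂) := by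
        rw [← hab]; exact hrest.head h'
      exact ⟨a, b, hout, hab, Relation.ReflTransGen.refl,
        aux_reach2 hP₁ hA₁ hP₂ hA₂ C b e₂ hr⟩
    · have ht : C.k₁ (G₁.t a) = G.s c := by rw [← C.tgt₁ a hout]; exact h'
      have hntv : ¬ G₁.OutputVertex (G₁.t a) := fun ⟨hσ, _⟩ => hout hσ
      by_cases hc : ∃ a', C.j₁ a' = c
      · obtain ⟨a', rfl⟩ := hc
        have h2 : G.s (C.j₁ a') = C.k₁ (G₁.s a') := C.src₁ a'
        have hstep : G₁.step a a' :=
          C.injV₁ _ _ hntv (aux_not_outV G₁ hP₁ hA₁ a') (by rw [ht, h2])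
        obtain ⟨o, i, h1, h2, h3, h4⟩ := ih a' rfl
        exact ⟨o, i, h1, h2, h3.head hstep, h4⟩
      · obtain ⟨b, rfl⟩ := (C.coverE c).resolve_left hc
        by_cases hbin : G₂.InputEdge b
        · obtain ⟨a'', _, hab⟩ := C.glueIn b hbin
          exact absurd ⟨a'', hab⟩ hc
        · have h2 : G.s (C.j₂ b) = C.k₂ (G₂.s b) := C.src₂ b hbin
          exact absurd (by rw [ht, h2])
            (C.disjV _ _ hntv (fun hw => hbin hw.1))
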